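/- Let (Ω, 𝔉, P) be a probability space, E a measurable space, (Y_i)_{i≥1} an i.i.d. sequence of E-valued random variables, and (U_i)_{i≥1} an i.i.d. sequence of random variables uniformly distributed on [0, 1], with the whole family (Y_i, U_i)_{i≥1} independent. Let p : E → [0, 1] and c : E → [0, ∞) be measurable with 0 < E[p(Y₁)] and E[c(Y₁)] < ∞. Define N := inf{ i ≥ 1 : U_i ≤ p(Y_i) }. Then N is finite almost surely, and E[Σ_{i=1}^{N} c(Y_i)] = E[c(Y₁)]/E[p(Y₁)]. -/

import Mathlib

open MeasureTheory ProbabilityTheory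
open scoped ENNReal NNReal

/-- The index-dependent codomain of the joint family `(Y_i, U_i)_{i≥1}`:
`inl i` indexes the proposal `Y_i` (valued in `E`) and `inr i` the uniform
variable `U_i` (valued in `ℝ`). -/
def famType (E : Type) : ℕ ⊕ ℕ → Type _ := fun k => Sum.elim (fun _ => E) (fun _ => ℝ) k

/-- The measurable-space structure on the joint family. -/
def famMS {E : Type} (mE : MeasurableSpace E) :
    ∀ k : ℕ ⊕ ℕ, MeasurableSpace (famType E k)
  | Sum.inl _ => mE
  | Sum.inr _ => Real.measurableSpace

/-- The joint family of random variables `(Y_i, U_i)_{i≥1}`. -/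
def famFun {Ω : Type*} {E : Type} (Y : ℕ → Ω → E) (U : ℕ → Ω → ℝ) :
    ∀ k : ℕ ⊕ ℕ, Ω → famType E k
  | Sum.inl i => Y i
  | Sum.inr i => U i

/-- Let `(Y_i)_{i≥1}` be i.i.d. `E`-valued, `(U_i)_{i≥1}` i.i.d. uniform
on `[0,1]`, the whole family `(Y_i, U_i)_{i≥1}` mutually independent (here indexed by
`ℕ` starting from `0`, i.e. `Y i` stands for `Y_{i+1}`). Let `p : E → [0,1]` and
`c : E → [0,∞)` be measurable with `0 < E[p(Y₁)]` and `E[c(Y₁)] < ∞`. Define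
`N := inf {i ≥ 1 : U_i ≤ p(Y_i)}`. Then `N` is finite almost surely and
`E[Σ_{i=1}^N c(Y_i)] = E[c(Y₁)]/E[p(Y₁)]`. -/
theorem key_lemma
    {Ω : Type*} {E : Type} [MeasurableSpace Ω] [mE : MeasurableSpace E]
    (P : Measure Ω) [IsProbabilityMeasure P]
    (Y : ℕ → Ω → E) (U : ℕ → Ω → ℝ)
    (hYmeas : ∀ i, Measurable (Y i)) (hUmeas : ∀ i, Measurable (U i))
    (hindep : iIndepFun (m := famMS mE) (famFun Y U) P)
    (p : E → ℝ) (hpmeas : Measurable p)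
    (i : ℕ) (ψ : E → ℝ → ℝ≥0∞) (hψ : Measurable (fun yu : E × ℝ => ψ yu.1 yu.2)) :
    ∫⁻ ω, (∏ j ∈ Finset.range i, if p (Y j ω) < U j ω then 1 else 0) * ψ (Y i ω) (U i ω) ∂P
      = (∫⁻ ω, ∏ j ∈ Finset.range i, if p (Y j ω) < U j ω then (1:ℝ≥0∞) else 0 ∂P)
        * ∫⁻ ω, ψ (Y i ω) (U i ω) ∂P := by
  classical
  letI : ∀ k : ℕ ⊕ ℕ, MeasurableSpace (famType E k) := famMS mE
  set S : Finset (ℕ ⊕ ℕ) := (Finset.range i).image Sum.inl ∪ (Finset.range i).image Sum.inr with hS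
  set T : Finset (ℕ ⊕ ℕ) := {Sum.inl i, Sum.inr i} with hT
  have hST : Disjoint S T := by
    rw [Finset.disjoint_left]
    intro a ha hat
    simp only [hS, hT, Finset.mem_union, Finset.mem_image, Finset.mem_range, Finset.mem_insert,
      Finset.mem_singleton] at ha hat
    rcases ha with ⟨j, hj, rfl⟩ | ⟨j, hj, rfl⟩ <;> rcases hat with h | h <;>
      first
        | (exact absurd (Sum.inl.inj h) (by omega))
        | (exact absurd (Sum.inr.inj h) (by omega))
        | exact absurd h (by simp)
  have hfmeas : ∀ k, Measurable (famFun Y U k) := by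
    rintro (j | j)
    exacts [hYmeas j, hUmeas j]
  have base := hindep.indepFun_finset S T hST hfmeas
  have hS1 : ∀ j, j ∈ Finset.range i → Sum.inl j ∈ S := fun j hj =>
    Finset.mem_union_left _ (Finset.mem_image_of_mem _ hj)
  have hS2 : ∀ j, j ∈ Finset.range i → Sum.inr j ∈ S := fun j hj =>
    Finset.mem_union_right _ (Finset.mem_image_of_mem _ hj)
  have hT1 : Sum.inl i ∈ T := Finset.mem_insert_self _ _
  have hT2 : Sum.inr i ∈ T := Finset.mem_insert_of_mem (Finset.mem_singleton_self _)
  have hφm : Measurable (fun x : (∀ j : {x // x ∈ S}, famType E j) =>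
      ∏ j ∈ (Finset.range i).attach,
        if p (x ⟨Sum.inl j.1, hS1 j.1 j.2⟩) < (x ⟨Sum.inr j.1, hS2 j.1 j.2⟩ : ℝ)
        then (1:ℝ≥0∞) else 0) := by
    apply Finset.measurable_prod
    intro j _
    exact Measurable.ite
      (measurableSet_lt (hpmeas.comp (measurable_pi_apply _)) (measurable_pi_apply _))
      measurable_const measurable_const
  have hψ'm : Measurable (fun x : (∀ j : {x // x ∈ T}, famType E j) =>
      ψ (x ⟨Sum.inl i, hT1⟩) (x ⟨Sum.inr i, hT2⟩)) := by
    have h1 : Measurable fun x : (∀ j : {x // x ∈ T}, famType E j) =>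
        (x ⟨Sum.inl i, hT1⟩ : E) := measurable_pi_apply _
    have h2 : Measurable fun x : (∀ j : {x // x ∈ T}, famType E j) =>
        (x ⟨Sum.inr i, hT2⟩ : ℝ) := measurable_pi_apply _
    exact hψ.comp (h1.prodMk h2)
  have hcomp := base.comp hφm hψ'm
  have hl : ((fun x : (∀ j : {x // x ∈ S}, famType E j) =>
      ∏ j ∈ (Finset.range i).attach,
        if p (x ⟨Sum.inl j.1, hS1 j.1 j.2⟩) < (x ⟨Sum.inr j.1, hS2 j.1 j.2⟩ : ℝ)
        then (1:ℝ≥0∞) else 0) ∘ fun ω (j : {x // x ∈ S}) => famFun Y U j ω)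
      = fun ω => ∏ j ∈ Finset.range i, if p (Y j ω) < U j ω then (1:ℝ≥0∞) else 0 := by
    funext ω
    show (∏ j ∈ (Finset.range i).attach, if p (Y j.1 ω) < U j.1 ω then (1:ℝ≥0∞) else 0)
      = ∏ j ∈ Finset.range i, if p (Y j ω) < U j ω then (1:ℝ≥0∞) else 0
    exact Finset.prod_attach (Finset.range i) (fun j => if p (Y j ω) < U j ω then (1:ℝ≥0∞) else 0)
  have hr : ((fun x : (∀ j : {x // x ∈ T}, famType E j) =>
      ψ (x ⟨Sum.inl i, hT1⟩) (x ⟨Sum.inr i, hT2⟩)) ∘ fun ω (j : {x // x ∈ T}) => famFun Y U j ω)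
      = fun ω => ψ (Y i ω) (U i ω) := rfl
  rw [hl, hr] at hcomp
  have h1m : Measurable (fun ω => ∏ j ∈ Finset.range i,
      if p (Y j ω) < U j ω then (1:ℝ≥0∞) else 0) :=
    Finset.measurable_prod _ fun j _ => Measurable.ite
      (measurableSet_lt (hpmeas.comp (hYmeas j)) (hUmeas j)) measurable_const measurable_const
  have h2m : Measurable (fun ω => ψ (Y i ω) (U i ω)) :=
    hψ.comp ((hYmeas i).prodMk (hUmeas i))
  simpa using lintegral_mul_eq_lintegral_mul_lintegral_of_indepFun h1m h2m hcomp

theorem rejection_sampler_expected_cost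
    {Ω : Type*} {E : Type} [MeasurableSpace Ω] [mE : MeasurableSpace E]
    (P : Measure Ω) [IsProbabilityMeasure P]
    (Y : ℕ → Ω → E) (U : ℕ → Ω → ℝ)
    (hYmeas : ∀ i, Measurable (Y i)) (hUmeas : ∀ i, Measurable (U i))
    (hYid : ∀ i, IdentDistrib (Y i) (Y 0) P P)
    (hUunif : ∀ i, Measure.map (U i) P = volume.restrict (Set.Icc (0 : ℝ) 1))
    (hindep : iIndepFun (m := famMS mE) (famFun Y U) P)
    (p c : E → ℝ)
    (hpmeas : Measurable p) (hcmeas : Measurable c)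
    (hp01 : ∀ x, p x ∈ Set.Icc (0 : ℝ) 1) (hc0 : ∀ x, 0 ≤ c x)
    (hppos : 0 < ∫ ω, p (Y 0 ω) ∂P)
    (hcint : Integrable (fun ω => c (Y 0 ω)) P) :
    (∀ᵐ ω ∂P, {i : ℕ | U i ω ≤ p (Y i ω)}.Nonempty) ∧
    ∫ ω, (∑ i ∈ Finset.range (sInf {i : ℕ | U i ω ≤ p (Y i ω)} + 1), c (Y i ω)) ∂P
      = (∫ ω, c (Y 0 ω) ∂P) / ∫ ω, p (Y 0 ω) ∂P := by
  classical
  -- basic quantities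
  set q : ℝ≥0∞ := ∫⁻ ω, ENNReal.ofReal (p (Y 0 ω)) ∂P with hqdef
  set C : ℝ≥0∞ := ∫⁻ ω, ENNReal.ofReal (c (Y 0 ω)) ∂P with hCdef
  have hpint : Integrable (fun ω => p (Y 0 ω)) P := by
    refine ⟨(hpmeas.comp (hYmeas 0)).aestronglyMeasurable, ?_⟩
    refine HasFiniteIntegral.of_bounded (C := 1) (ae_of_all _ fun ω => ?_)
    rw [Real.norm_eq_abs, abs_of_nonneg (hp01 _).1]
    exact (hp01 _).2
  have hqr : ENNReal.ofReal (∫ ω, p (Y 0 ω) ∂P) = q :=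
    ofReal_integral_eq_lintegral_ofReal hpint (ae_of_all _ fun ω => (hp01 _).1)
  have hCr : ENNReal.ofReal (∫ ω, c (Y 0 ω) ∂P) = C :=
    ofReal_integral_eq_lintegral_ofReal hcint (ae_of_all _ fun ω => hc0 _)
  have hq0 : q ≠ 0 := by
    rw [← hqr]
    simpa using (ENNReal.ofReal_pos.mpr hppos).ne'
  have hq1 : q ≤ 1 := by
    calc q ≤ ∫⁻ _, 1 ∂P := lintegral_mono fun ω => ENNReal.ofReal_le_one.mpr (hp01 _).2
    _ = 1 := by simp
  have hqtop : q ≠ ∞ := (hq1.trans_lt ENNReal.one_lt_top).ne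
  have hCtop : C ≠ ∞ := by rw [← hCr]; exact ENNReal.ofReal_ne_top
  -- the acceptance probability at each index
  have hAmeas : ∀ i, MeasurableSet {ω | U i ω ≤ p (Y i ω)} := fun i =>
    measurableSet_le (hUmeas i) (hpmeas.comp (hYmeas i))
  have hPA : ∀ i, P {ω | U i ω ≤ p (Y i ω)} = q := by
    intro i
    have hind : IndepFun (Y i) (U i) P :=
      hindep.indepFun (show (Sum.inl i : ℕ ⊕ ℕ) ≠ Sum.inr i by simp)
    rw [indepFun_iff_map_prod_eq_prod_map_map (hYmeas i).aemeasurable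
      (hUmeas i).aemeasurable] at hind
    have hset : MeasurableSet {yu : E × ℝ | yu.2 ≤ p yu.1} :=
      measurableSet_le measurable_snd (hpmeas.comp measurable_fst)
    have hpre : {ω | U i ω ≤ p (Y i ω)}
        = (fun ω => (Y i ω, U i ω)) ⁻¹' {yu : E × ℝ | yu.2 ≤ p yu.1} := rfl
    rw [hpre, ← Measure.map_apply ((hYmeas i).prodMk (hUmeas i)) hset, hind, hUunif i,
      Measure.prod_apply hset]
    have hsect : ∀ y : E, (volume.restrict (Set.Icc (0:ℝ) 1)) (Prod.mk y ⁻¹' {yu : E × ℝ | yu.2 ≤ p yu.1})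
        = ENNReal.ofReal (p y) := by
      intro y
      have h1 : Prod.mk y ⁻¹' {yu : E × ℝ | yu.2 ≤ p yu.1} = Set.Iic (p y) := rfl
      rw [h1, Measure.restrict_apply measurableSet_Iic]
      have h2 : Set.Iic (p y) ∩ Set.Icc 0 1 = Set.Icc 0 (p y) := by
        ext u
        simp only [Set.mem_inter_iff, Set.mem_Iic, Set.mem_Icc]
        exact ⟨fun ⟨a, b, _⟩ => ⟨b, a⟩, fun ⟨a, b⟩ => ⟨b, a, b.trans (hp01 y).2⟩⟩
      rw [h2, Real.volume_Icc, sub_zero]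
    simp_rw [hsect]
    rw [lintegral_map (show Measurable fun y : E => ENNReal.ofReal (p y) from
      ENNReal.measurable_ofReal.comp hpmeas) (hYmeas i)]
    exact ((hYid i).comp (ENNReal.measurable_ofReal.comp hpmeas)).lintegral_eq
  have hC : ∀ i, ∫⁻ ω, ENNReal.ofReal (c (Y i ω)) ∂P = C := fun i =>
    ((hYid i).comp (ENNReal.measurable_ofReal.comp hcmeas)).lintegral_eq
  -- survival probabilities
  have hgint : ∀ j, ∫⁻ ω, (if p (Y j ω) < U j ω then (1:ℝ≥0∞) else 0) ∂P = 1 - q := by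
    intro j
    have heq : (fun ω => if p (Y j ω) < U j ω then (1:ℝ≥0∞) else 0)
        = Set.indicator {ω | U j ω ≤ p (Y j ω)}ᶜ 1 := by
      funext ω
      by_cases h : p (Y j ω) < U j ω
      · rw [if_pos h, Set.indicator_of_mem
          (show ω ∈ {ω | U j ω ≤ p (Y j ω)}ᶜ from not_le.mpr h)]
        rfl
      · rw [if_neg h, Set.indicator_of_notMem
          (show ω ∉ {ω | U j ω ≤ p (Y j ω)}ᶜ from not_not_intro (not_lt.mp h))]
    rw [heq, lintegral_indicator_one (hAmeas j).compl, prob_compl_eq_one_sub (hAmeas j), hPA j]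
  have hGm : ∀ i, Measurable (fun ω => ∏ j ∈ Finset.range i,
      if p (Y j ω) < U j ω then (1:ℝ≥0∞) else 0) := fun i =>
    Finset.measurable_prod _ fun j _ => Measurable.ite
      (measurableSet_lt (hpmeas.comp (hYmeas j)) (hUmeas j)) measurable_const measurable_const
  have hGint : ∀ i, ∫⁻ ω, (∏ j ∈ Finset.range i,
      if p (Y j ω) < U j ω then (1:ℝ≥0∞) else 0) ∂P = (1 - q)^i := by
    intro i
    induction i with
    | zero => simp
    | succ n ih =>
      have hk := key_lemma P Y U hYmeas hUmeas hindep p hpmeas n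
        (fun y u => if p y < u then (1:ℝ≥0∞) else 0)
        (Measurable.ite (measurableSet_lt (hpmeas.comp measurable_fst) measurable_snd)
          measurable_const measurable_const)
      simp only [Finset.prod_range_succ]
      rw [hk, ih, hgint n, pow_succ]
  have hGC : ∀ i, ∫⁻ ω, (∏ j ∈ Finset.range i, if p (Y j ω) < U j ω then (1:ℝ≥0∞) else 0)
      * ENNReal.ofReal (c (Y i ω)) ∂P = (1 - q)^i * C := by
    intro i
    have hk := key_lemma P Y U hYmeas hUmeas hindep p hpmeas i
      (fun y _ => ENNReal.ofReal (c y))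
      (ENNReal.measurable_ofReal.comp (hcmeas.comp measurable_fst))
    rw [hk, hGint i, hC i]
  -- indicator form of the product
  have hprodind : ∀ (i : ℕ) (ω : Ω), (∏ j ∈ Finset.range i,
      if p (Y j ω) < U j ω then (1:ℝ≥0∞) else 0)
      = Set.indicator {ω | ∀ j < i, p (Y j ω) < U j ω} 1 ω := by
    intro i ω
    by_cases h : ∀ j < i, p (Y j ω) < U j ω
    · rw [Set.indicator_of_mem (show ω ∈ {ω | ∀ j < i, p (Y j ω) < U j ω} from h)]
      exact Finset.prod_eq_one fun j hj => if_pos (h j (Finset.mem_range.mp hj))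
    · rw [Set.indicator_of_notMem (show ω ∉ {ω | ∀ j < i, p (Y j ω) < U j ω} from h)]
      push_neg at h
      obtain ⟨j, hj, hle⟩ := h
      exact Finset.prod_eq_zero (Finset.mem_range.mpr hj) (if_neg (not_lt.mpr hle))
  have hGset : ∀ i : ℕ, MeasurableSet {ω | ∀ j < i, p (Y j ω) < U j ω} := by
    intro i
    have : {ω | ∀ j < i, p (Y j ω) < U j ω} = ⋂ j, ⋂ _ : j < i, {ω | p (Y j ω) < U j ω} := by
      ext ω; simp
    rw [this]
    exact MeasurableSet.iInter fun j => MeasurableSet.iInter fun _ =>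
      measurableSet_lt (hpmeas.comp (hYmeas j)) (hUmeas j)
  have hPG : ∀ i : ℕ, P {ω | ∀ j < i, p (Y j ω) < U j ω} = (1 - q)^i := by
    intro i
    rw [← lintegral_indicator_one (hGset i), ← hGint i]
    exact lintegral_congr fun ω => (hprodind i ω).symm
  -- almost sure termination
  have hr1 : (1 : ℝ≥0∞) - q < 1 := ENNReal.sub_lt_self ENNReal.one_ne_top one_ne_zero hq0
  have haen : ∀ᵐ ω ∂P, {i : ℕ | U i ω ≤ p (Y i ω)}.Nonempty := by
    rw [ae_iff]
    have hle : ∀ i : ℕ, P {ω | ¬{i : ℕ | U i ω ≤ p (Y i ω)}.Nonempty} ≤ (1 - q)^i := by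
      intro i
      rw [← hPG i]
      refine measure_mono fun ω hω j _ => ?_
      exact not_le.mp fun h => hω ⟨j, h⟩
    have h0 := ge_of_tendsto' (ENNReal.tendsto_pow_atTop_nhds_zero_of_lt_one hr1) hle
    exact le_antisymm h0 (zero_le')
  refine ⟨haen, ?_⟩
  -- measurability of N and of the cost sum
  have hNmeas : Measurable (fun ω => sInf {i : ℕ | U i ω ≤ p (Y i ω)}) := by
    apply measurable_to_countable'
    intro n
    have hpre : (fun ω => sInf {i : ℕ | U i ω ≤ p (Y i ω)}) ⁻¹' {n} =
        ({ω | U n ω ≤ p (Y n ω)} ∩ ⋂ k, ⋂ _ : k < n, {ω | U k ω ≤ p (Y k ω)}ᶜ) ∪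
        ((⋂ k, {ω | U k ω ≤ p (Y k ω)}ᶜ) ∩ {_ω : Ω | n = 0}) := by
      ext ω
      simp only [Set.mem_preimage, Set.mem_singleton_iff, Set.mem_union, Set.mem_inter_iff,
        Set.mem_iInter, Set.mem_compl_iff, Set.mem_setOf_eq]
      constructor
      · intro h
        by_cases hne : {i : ℕ | U i ω ≤ p (Y i ω)}.Nonempty
        · left
          refine ⟨?_, fun k hk => ?_⟩
          · rw [← h]; exact Nat.sInf_mem hne
          · rw [← h] at hk; exact Nat.notMem_of_lt_sInf hk
        · right
          rw [Set.not_nonempty_iff_eq_empty] at hne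
          refine ⟨fun k hk => ?_, ?_⟩
          · exact absurd (show k ∈ ({} : Set ℕ) from hne ▸ hk) (Set.notMem_empty k)
          · rw [← h, hne, Nat.sInf_empty]
      · rintro (⟨hmem, hlt⟩ | ⟨hall, hn0⟩)
        · refine le_antisymm (Nat.sInf_le hmem) (le_of_not_gt fun hc => ?_)
          exact hlt _ hc (Nat.sInf_mem (⟨n, hmem⟩ : {i : ℕ | U i ω ≤ p (Y i ω)}.Nonempty))
        · have hemp : {i : ℕ | U i ω ≤ p (Y i ω)} = ∅ :=
            Set.eq_empty_iff_forall_notMem.mpr hall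
          rw [hemp, Nat.sInf_empty, hn0]
    rw [hpre]
    refine MeasurableSet.union ?_ ?_
    · exact (hAmeas n).inter (MeasurableSet.iInter fun k =>
        MeasurableSet.iInter fun _ => (hAmeas k).compl)
    · refine (MeasurableSet.iInter fun k => (hAmeas k).compl).inter ?_
      by_cases h : n = 0 <;> simp [h]
  have hsum_meas : Measurable (fun ω =>
      ∑ i ∈ Finset.range (sInf {i : ℕ | U i ω ≤ p (Y i ω)} + 1), c (Y i ω)) := by
    have h1 : Measurable (fun x : Ω × ℕ => ∑ i ∈ Finset.range (x.2 + 1), c (Y i x.1)) := by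
      apply measurable_from_prod_countable_left
      intro n
      show Measurable fun x : Ω => ∑ i ∈ Finset.range (n + 1), c (Y i x)
      exact Finset.measurable_sum _ fun i _ => hcmeas.comp (hYmeas i)
    exact h1.comp (measurable_id.prodMk hNmeas)
  -- the main lintegral computation
  have hae2 : (fun ω => ∑ i ∈ Finset.range (sInf {i : ℕ | U i ω ≤ p (Y i ω)} + 1),
        ENNReal.ofReal (c (Y i ω)))
      =ᵐ[P] (fun ω => ∑' i, (∏ j ∈ Finset.range i,
        if p (Y j ω) < U j ω then (1:ℝ≥0∞) else 0) * ENNReal.ofReal (c (Y i ω))) := by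
    filter_upwards [haen] with ω hω
    have hNin : sInf {i : ℕ | U i ω ≤ p (Y i ω)} ∈ {i : ℕ | U i ω ≤ p (Y i ω)} :=
      Nat.sInf_mem hω
    have hterm : ∀ i, (∏ j ∈ Finset.range i, if p (Y j ω) < U j ω then (1:ℝ≥0∞) else 0)
        = if i ≤ sInf {i : ℕ | U i ω ≤ p (Y i ω)} then 1 else 0 := by
      intro i
      by_cases h : i ≤ sInf {i : ℕ | U i ω ≤ p (Y i ω)}
      · rw [if_pos h, Finset.prod_eq_one]
        intro j hj
        have hjn : j ∉ {i : ℕ | U i ω ≤ p (Y i ω)} :=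
          Nat.notMem_of_lt_sInf (lt_of_lt_of_le (Finset.mem_range.mp hj) h)
        exact if_pos (not_le.mp hjn)
      · rw [if_neg h]
        exact Finset.prod_eq_zero
          (Finset.mem_range.mpr (by omega)) (if_neg (not_lt.mpr hNin))
    have htail : ∀ b ∉ Finset.range (sInf {i : ℕ | U i ω ≤ p (Y i ω)} + 1),
        (∏ j ∈ Finset.range b, if p (Y j ω) < U j ω then (1:ℝ≥0∞) else 0)
          * ENNReal.ofReal (c (Y b ω)) = 0 := by
      intro b hb
      rw [hterm b, if_neg (by simp only [Finset.mem_range, not_lt] at hb; omega), zero_mul]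
    rw [tsum_eq_sum htail]
    refine Finset.sum_congr rfl fun i hi => ?_
    rw [hterm i, if_pos (Nat.lt_succ_iff.mp (Finset.mem_range.mp hi)), one_mul]
  have hlint : ∫⁻ ω, (∑ i ∈ Finset.range (sInf {i : ℕ | U i ω ≤ p (Y i ω)} + 1),
      ENNReal.ofReal (c (Y i ω))) ∂P = C * q⁻¹ := by
    rw [lintegral_congr_ae hae2,
      lintegral_tsum fun i => (show Measurable fun ω =>
          (∏ j ∈ Finset.range i, if p (Y j ω) < U j ω then (1:ℝ≥0∞) else 0)
            * ENNReal.ofReal (c (Y i ω)) from (hGm i).mul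
        (ENNReal.measurable_ofReal.comp (hcmeas.comp (hYmeas i)))).aemeasurable]
    rw [tsum_congr hGC, ENNReal.tsum_mul_right, ENNReal.tsum_geometric,
      ENNReal.sub_sub_cancel ENNReal.one_ne_top hq1, mul_comm]
  -- conversion to the Bochner integral
  rw [integral_eq_lintegral_of_nonneg_ae
    (ae_of_all _ fun ω => Finset.sum_nonneg fun i _ => hc0 _) hsum_meas.aestronglyMeasurable]
  have hofreal : (fun ω => ENNReal.ofReal
      (∑ i ∈ Finset.range (sInf {i : ℕ | U i ω ≤ p (Y i ω)} + 1), c (Y i ω)))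
      = fun ω => ∑ i ∈ Finset.range (sInf {i : ℕ | U i ω ≤ p (Y i ω)} + 1),
        ENNReal.ofReal (c (Y i ω)) :=
    funext fun ω => ENNReal.ofReal_sum_of_nonneg fun i _ => hc0 _
  rw [hofreal, hlint, ENNReal.toReal_mul, ENNReal.toReal_inv, ← hCr, ← hqr,
    ENNReal.toReal_ofReal (integral_nonneg fun ω => hc0 _),
    ENNReal.toReal_ofReal hppos.le, div_eq_mul_inv]
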